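/- Define the potential φ(E_t, E_{t−1}) = Σ_i E_t(i)·g_{t−1}(i) − (r + 1/2)·Σ_i (E_t(i) + E_{t−1}(i)), where g_t(i) = Σ_{j=i−r}^{i+r} E_t(j) and E_{t+1} = maj_r(E_t). Then φ(E_{t+1}, E_t) − φ(E_t, E_{t−1}) = Σ_{i : E_{t+1}(i) ≠ E_{t−1}(i)} |g_t(i) − (r + 1/2)| ≥ (1/2)·|{i : E_{t+1}(i) ≠ E_{t−1}(i)}|. -/

import Mathlib

open Finset

/-- The number of ones in the radius-`r` neighborhood of `i`, for integer-valued 0/1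
configurations. -/
def gsum (n r : ℕ) [NeZero n] (E : ZMod n → ℚ) (i : ZMod n) : ℚ :=
  ∑ t ∈ Finset.range (2 * r + 1), E (i - (r : ZMod n) + (t : ZMod n))

/-- The Goles–Olivos potential function. -/
def pot (n r : ℕ) [NeZero n] (A B : ZMod n → ℚ) : ℚ :=
  (∑ i : ZMod n, A i * gsum n r B i) -
    ((r : ℚ) + 1 / 2) * ∑ i : ZMod n, (A i + B i)

lemma gsum_sym (n r : ℕ) [NeZero n] (A B : ZMod n → ℚ) :
    ∑ i : ZMod n, A i * gsum n r B i = ∑ i : ZMod n, B i * gsum n r A i := by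
  unfold gsum
  simp_rw [Finset.mul_sum]
  rw [Finset.sum_comm]
  conv_rhs => rw [Finset.sum_comm]
  rw [← Finset.sum_range_reflect]
  refine Finset.sum_congr rfl fun t ht => ?_
  rw [Finset.mem_range] at ht
  have ht' : t ≤ 2 * r := by omega
  have hcast : ((2 * r + 1 - 1 - t : ℕ) : ZMod n) = 2 * r - t := by
    push_cast [Nat.cast_sub ht']
    ring_nf
  refine Fintype.sum_equiv (Equiv.addRight ((r : ZMod n) - (t : ZMod n))) _ _ fun i => ?_
  simp only [Equiv.coe_addRight, hcast]
  rw [mul_comm]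
  congr 1
  · congr 1; push_cast; ring
  · congr 1; ring

lemma gsum_int (n r : ℕ) [NeZero n] (E : ZMod n → ℚ)
    (h : ∀ i, E i = 0 ∨ E i = 1) (i : ZMod n) :
    ∃ m : ℤ, gsum n r E i = m := by
  unfold gsum
  induction Finset.range (2 * r + 1) using Finset.induction with
  | empty => exact ⟨0, by simp⟩
  | @insert x s hx ih =>
    obtain ⟨m, hm⟩ := ih
    rcases h _ with h' | h'
    · exact ⟨m, by rw [Finset.sum_insert hx, h', hm, zero_add]⟩
    · exact ⟨m + 1, by rw [Finset.sum_insert hx, h', hm]; push_cast; ring⟩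

/-- One-step increase of the potential:
`φ(E₂, E₁) - φ(E₁, E₀) = ∑_{i : E₂ i ≠ E₀ i} |g₁(i) - (r + 1/2)| ≥ (1/2)·#{i : E₂ i ≠ E₀ i}`,
where `E₂ = maj_r E₁`. -/
theorem potential_increase (n r : ℕ) [NeZero n] (hr : 1 ≤ r)
    (E₀ E₁ E₂ : ZMod n → ℚ)
    (h₀ : ∀ i, E₀ i = 0 ∨ E₀ i = 1) (h₁ : ∀ i, E₁ i = 0 ∨ E₁ i = 1)
    (h₂ : ∀ i, E₂ i = if ((r : ℚ) + 1 ≤ gsum n r E₁ i) then 1 else 0) :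
    pot n r E₂ E₁ - pot n r E₁ E₀ =
      (∑ i ∈ Finset.univ.filter (fun i : ZMod n => E₂ i ≠ E₀ i),
        |gsum n r E₁ i - ((r : ℚ) + 1 / 2)|) ∧
    (1 / 2 : ℚ) * (Finset.univ.filter (fun i : ZMod n => E₂ i ≠ E₀ i)).card ≤
      ∑ i ∈ Finset.univ.filter (fun i : ZMod n => E₂ i ≠ E₀ i),
        |gsum n r E₁ i - ((r : ℚ) + 1 / 2)| := by
  -- pointwise absolute value facts
  have key : ∀ i : ZMod n,
      (E₂ i - E₀ i) * (gsum n r E₁ i - ((r : ℚ) + 1 / 2)) =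
        (if E₂ i ≠ E₀ i then |gsum n r E₁ i - ((r : ℚ) + 1 / 2)| else 0) ∧
      (E₂ i ≠ E₀ i → (1 / 2 : ℚ) ≤ |gsum n r E₁ i - ((r : ℚ) + 1 / 2)|) := by
    intro i
    obtain ⟨m, hm⟩ := gsum_int n r E₁ h₁ i
    have h2i := h₂ i
    by_cases hc : ((r : ℚ) + 1 ≤ gsum n r E₁ i)
    · rw [if_pos hc] at h2i
      have hge : (1 / 2 : ℚ) ≤ gsum n r E₁ i - ((r : ℚ) + 1 / 2) := by linarith
      have habs : |gsum n r E₁ i - ((r : ℚ) + 1 / 2)| =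
          gsum n r E₁ i - ((r : ℚ) + 1 / 2) := abs_of_nonneg (by linarith)
      refine ⟨?_, fun _ => by rw [habs]; exact hge⟩
      rcases h₀ i with h0 | h0
      · rw [if_pos (by rw [h2i, h0]; norm_num), habs, h2i, h0]; ring
      · rw [if_neg (by rw [h2i, h0]; simp), h2i, h0]; ring
    · rw [if_neg hc] at h2i
      push_neg at hc
      have hmr : (m : ℚ) < (r : ℚ) + 1 := by rw [← hm]; exact hc
      have hmr' : m ≤ (r : ℤ) := by exact_mod_cast Int.lt_add_one_iff.mp (by exact_mod_cast hmr)
      have hle : gsum n r E₁ i - ((r : ℚ) + 1 / 2) ≤ -(1 / 2) := by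
        rw [hm]
        have : (m : ℚ) ≤ (r : ℚ) := by exact_mod_cast hmr'
        linarith
      have habs : |gsum n r E₁ i - ((r : ℚ) + 1 / 2)| =
          -(gsum n r E₁ i - ((r : ℚ) + 1 / 2)) := abs_of_nonpos (by linarith)
      refine ⟨?_, fun _ => by rw [habs]; linarith⟩
      rcases h₀ i with h0 | h0
      · rw [if_neg (by rw [h2i, h0]; simp), h2i, h0]; ring
      · rw [if_pos (by rw [h2i, h0]; norm_num), habs, h2i, h0]; ring
  have hmain : pot n r E₂ E₁ - pot n r E₁ E₀ =
      ∑ i ∈ Finset.univ.filter (fun i : ZMod n => E₂ i ≠ E₀ i),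
        |gsum n r E₁ i - ((r : ℚ) + 1 / 2)| := by
    rw [Finset.sum_filter]
    unfold pot
    rw [gsum_sym n r E₁ E₀]
    simp only [Finset.mul_sum, ← Finset.sum_sub_distrib]
    refine Finset.sum_congr rfl fun i _ => ?_
    rw [← (key i).1]
    ring
  refine ⟨hmain, ?_⟩
  calc (1 / 2 : ℚ) * (Finset.univ.filter (fun i : ZMod n => E₂ i ≠ E₀ i)).card
      = ∑ _i ∈ Finset.univ.filter (fun i : ZMod n => E₂ i ≠ E₀ i), (1 / 2 : ℚ) := by
        rw [Finset.sum_const, nsmul_eq_mul, mul_comm]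
    _ ≤ _ := Finset.sum_le_sum fun i hi => (key i).2 (Finset.mem_filter.mp hi).2
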